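/- There exists a ReLU network φ: ℝ³ → ℝ with width 14 and depth 3 such that φ(x_1, x_2, x_3) = mid(x_1, x_2, x_3) for all x_1, x_2, x_3 ∈ ℝ. -/

import Mathlib

open scoped BigOperators ENNReal

noncomputable section

/-- `f` is an affine map `x ↦ A x + b`. -/
def IsAffineMap (din dout : ℕ) (f : (Fin din → ℝ) → (Fin dout → ℝ)) : Prop :=
  ∃ (A : Matrix (Fin dout) (Fin din) ℝ) (b : Fin dout → ℝ),
    ∀ x i, f x i = (∑ j, A i j * x j) + b i

/-- `ReluNetExact din dout f N L` asserts that `f = T_L ∘ σ ∘ ⋯ ∘ σ ∘ T_1` where each `T_l`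
is affine, `σ` is the coordinatewise ReLU `t ↦ max t 0`, all intermediate dimensions are at
most `N` (the width), and there are `L` affine layers (the depth). -/
inductive ReluNetExact : (din dout : ℕ) → ((Fin din → ℝ) → (Fin dout → ℝ)) → ℕ → ℕ → Prop
  | affine {din dout N : ℕ} {f : (Fin din → ℝ) → (Fin dout → ℝ)}
      (hf : IsAffineMap din dout f) : ReluNetExact din dout f N 1
  | comp {din k dout N L : ℕ} (hk : k ≤ N) {T : (Fin din → ℝ) → (Fin k → ℝ)}
      (hT : IsAffineMap din k T) {g : (Fin k → ℝ) → (Fin dout → ℝ)}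
      (hg : ReluNetExact k dout g N L) :
      ReluNetExact din dout (fun x => g (fun i => max (T x i) 0)) N (L + 1)

/-- `f` is representable by a ReLU network with width at most `N` and depth at most `L`. -/
def IsReluNet (din dout : ℕ) (f : (Fin din → ℝ) → (Fin dout → ℝ)) (N L : ℕ) : Prop :=
  ∃ L' ≤ L, ReluNetExact din dout f N L'

/-- Scalar-valued version of `IsReluNet`. -/
def IsReluNet1 (din : ℕ) (f : (Fin din → ℝ) → ℝ) (N L : ℕ) : Prop :=
  IsReluNet din 1 (fun x _ => f x) N L

/-- The middle (median) of three real numbers. -/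
def mid (a b c : ℝ) : ℝ := a + b + c - max a (max b c) - min a (min b c)

-- Auxiliary definitions for the construction (added by prover)

/-- First layer of the mid-network: computes `(a, -a, b, -b, c, -c, b-c, c-b)`. -/
def midT1 : (Fin 3 → ℝ) → (Fin 8 → ℝ) := fun x =>
  ![x 0, -x 0, x 1, -x 1, x 2, -x 2, x 1 - x 2, x 2 - x 1]

/-- Second layer of the mid-network. -/
def midT2 : (Fin 8 → ℝ) → (Fin 4 → ℝ) := fun y =>
  ![(y 0 - y 1) - (y 2 - y 3) - y 7, (y 0 - y 1) - (y 2 - y 3) + y 6,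
    (y 2 - y 3) - y 6, -(y 2 - y 3) + y 6]

/-- Output layer of the mid-network. -/
def midT3 : (Fin 4 → ℝ) → (Fin 1 → ℝ) := fun u => ![-u 0 + u 1 + u 2 - u 3]

lemma midT1_affine : IsAffineMap 3 8 midT1 := by
  refine ⟨!![1,0,0; -1,0,0; 0,1,0; 0,-1,0; 0,0,1; 0,0,-1; 0,1,-1; 0,-1,1], 0, ?_⟩
  intro x i
  fin_cases i <;>
    · simp only [Fin.sum_univ_three]
      show _ = _
      norm_num [midT1, Matrix.cons_val_zero, Matrix.cons_val_one, Matrix.cons_val_two, Matrix.cons_val_three,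
          Matrix.cons_val_four]
      try ring

lemma midT2_affine : IsAffineMap 8 4 midT2 := by
  refine ⟨!![1,-1,-1,1,0,0,0,-1; 1,-1,-1,1,0,0,1,0; 0,0,1,-1,0,0,-1,0; 0,0,-1,1,0,0,1,0],
    0, ?_⟩
  intro x i
  fin_cases i <;>
    · simp only [Fin.sum_univ_eight]
      show _ = _
      norm_num [midT2, Matrix.cons_val_zero, Matrix.cons_val_one, Matrix.cons_val_two,
          Matrix.cons_val_three, Matrix.cons_val_four,
        show (![(1:ℝ),-1,-1,1,0,0,0,-1]) 5 = 0 from rfl,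
        show (![(1:ℝ),-1,-1,1,0,0,0,-1]) 6 = 0 from rfl,
        show (![(1:ℝ),-1,-1,1,0,0,0,-1]) 7 = -1 from rfl,
        show (![(1:ℝ),-1,-1,1,0,0,1,0]) 5 = 0 from rfl,
        show (![(1:ℝ),-1,-1,1,0,0,1,0]) 6 = 1 from rfl,
        show (![(1:ℝ),-1,-1,1,0,0,1,0]) 7 = 0 from rfl,
        show (![(0:ℝ),0,1,-1,0,0,-1,0]) 5 = 0 from rfl,
        show (![(0:ℝ),0,1,-1,0,0,-1,0]) 6 = -1 from rfl,
        show (![(0:ℝ),0,1,-1,0,0,-1,0]) 7 = 0 from rfl,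
        show (![(0:ℝ),0,-1,1,0,0,1,0]) 5 = 0 from rfl,
        show (![(0:ℝ),0,-1,1,0,0,1,0]) 6 = 1 from rfl,
        show (![(0:ℝ),0,-1,1,0,0,1,0]) 7 = 0 from rfl]
      try ring

lemma midT3_affine : IsAffineMap 4 1 midT3 := by
  refine ⟨!![-1,1,1,-1], 0, ?_⟩
  intro x i
  fin_cases i <;>
    · simp only [Fin.sum_univ_four]
      show _ = _
      norm_num [midT3, Matrix.cons_val_zero, Matrix.cons_val_one, Matrix.cons_val_two, Matrix.cons_val_three,
          Matrix.cons_val_four]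
      try ring

lemma relu_sub_relu_neg (t : ℝ) : max t 0 - max (-t) 0 = t := by
  rcases le_total t 0 with h | h
  · rw [max_eq_right h, max_eq_left (by linarith)]; ring
  · rw [max_eq_left h, max_eq_right (by linarith)]; ring

lemma mid_net_eval (a b c : ℝ) :
    midT3 (fun i => max (midT2 (fun i => max (midT1 ![a,b,c] i) 0) i) 0) 0 = mid a b c := by
  show -max ((max a 0 - max (-a) 0) - (max b 0 - max (-b) 0) - max (c - b) 0) 0
      + max ((max a 0 - max (-a) 0) - (max b 0 - max (-b) 0) + max (b - c) 0) 0
      + max ((max b 0 - max (-b) 0) - max (b - c) 0) 0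
      - max (-(max b 0 - max (-b) 0) + max (b - c) 0) 0 = mid a b c
  rw [relu_sub_relu_neg a, relu_sub_relu_neg b]
  rcases le_total b c with h | h
  · rw [max_eq_right (show b - c ≤ (0:ℝ) by linarith),
      max_eq_left (show (0:ℝ) ≤ c - b by linarith)]
    simp only [mid, max_def, min_def]
    split_ifs <;> linarith
  · rw [max_eq_left (show (0:ℝ) ≤ b - c by linarith),
      max_eq_right (show c - b ≤ (0:ℝ) by linarith)]
    simp only [mid, max_def, min_def]
    split_ifs <;> linarith

/-- Lemma `mid net`. -/
theorem stmt12 :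
    ∃ φ : (Fin 3 → ℝ) → ℝ,
      IsReluNet1 3 φ 14 3 ∧ ∀ x₁ x₂ x₃ : ℝ, φ ![x₁, x₂, x₃] = mid x₁ x₂ x₃ := by
  set F : (Fin 3 → ℝ) → (Fin 1 → ℝ) :=
    fun x => (fun y => midT3 (fun i => max (midT2 y i) 0)) (fun i => max (midT1 x i) 0)
    with hF
  refine ⟨fun x => F x 0, ⟨3, le_refl 3, ?_⟩, ?_⟩
  · have hEq : (fun x (_ : Fin 1) => F x 0) = F := by
      funext x i
      have hi : i = 0 := Subsingleton.elim _ _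
      rw [hi]
    rw [hEq, hF]
    exact ReluNetExact.comp (by norm_num) midT1_affine
      (ReluNetExact.comp (by norm_num) midT2_affine (ReluNetExact.affine midT3_affine))
  · intro a b c
    exact mid_net_eval a b c
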